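/- The Case II corner point satisfies ((1−δ₂)(δ₁−δ₁₂)/((1−δ₁)(1−δ₁₂)))·R₁* − ((δ₂−δ₁₂)/(1−δ₁₂))·R₂* ≤ R₀. (This is the inequality ((1−δ₂)/(1−δ₁))·k_{1|2} − k_{2|1} ≤ k₀, i.e., k_{0,3b} ≤ k₀, ensuring that Segment b of Phase 3 does not require more common bits than available.) -/

import Mathlib

/-- The Case II corner point satisfies
`((1−δ₂)(δ₁−δ₁₂)/((1−δ₁)(1−δ₁₂)))·R₁* − ((δ₂−δ₁₂)/(1−δ₁₂))·R₂* ≤ R₀`,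
which is the inequality `k_{0,3b} ≤ k₀`. -/
theorem caseII_k03b_le_k0 (δ₁ δ₂ δ₁₂ R₀ : ℝ)
    (h0 : 0 ≤ δ₁₂) (h1 : δ₁₂ ≤ δ₁) (h2 : δ₁ ≤ δ₂) (h3 : δ₂ < 1) (h4 : δ₁₂ < δ₂)
    (hR₀ : 0 ≤ R₀)
    (D R₁s R₂s : ℝ)
    (hD : D = (1 - δ₁₂) - (1 - δ₁) * (1 - δ₂) / (1 - δ₁₂))
    (hR₁ : R₁s = ((1 - δ₁) * (δ₂ - δ₁₂) - (δ₁ - δ₁₂) * R₀) / D)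
    (hR₂ : R₂s = ((1 - δ₂) * (δ₁ - δ₁₂) - (δ₂ - δ₁₂) * R₀) / D) :
    ((1 - δ₂) * (δ₁ - δ₁₂) / ((1 - δ₁) * (1 - δ₁₂))) * R₁s
      - ((δ₂ - δ₁₂) / (1 - δ₁₂)) * R₂s ≤ R₀ := by
  have ha : 0 < 1 - δ₁ := by linarith
  have hb : 0 < 1 - δ₂ := by linarith
  have hc : 0 < 1 - δ₁₂ := by linarith
  have hN : 0 < (1 - δ₁₂) ^ 2 - (1 - δ₁) * (1 - δ₂) := by nlinarith
  have hD' : D = ((1 - δ₁₂) ^ 2 - (1 - δ₁) * (1 - δ₂)) / (1 - δ₁₂) := by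
    rw [hD]; field_simp
  have hDpos : 0 < D := by rw [hD']; positivity
  subst hR₁ hR₂
  rw [hD']
  rw [sub_le_iff_le_add]
  field_simp
  have hN' : 0 < (1 - δ₁₂) ^ 2 - (1 - δ₂) * (1 - δ₁) := by linarith
  have ht : (δ₂ - δ₁₂) * ((1 - δ₂) * (δ₁ - δ₁₂) - (δ₂ - δ₁₂) * R₀) / ((1 - δ₁₂) ^ 2 - (1 - δ₂) * (1 - δ₁)) * ((1 - δ₁₂) ^ 2 - (1 - δ₂) * (1 - δ₁)) = (δ₂ - δ₁₂) * ((1 - δ₂) * (δ₁ - δ₁₂) - (δ₂ - δ₁₂) * R₀) := div_mul_cancel₀ _ hN'.ne'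
  have ht' := congrArg (fun z => (1 - δ₁) * z) ht
  rw [div_le_iff₀ hN']
  have hq : 0 ≤ δ₂ - δ₁₂ := by linarith
  have hp : 0 ≤ δ₁ - δ₁₂ := by linarith
  nlinarith [mul_nonneg hR₀ (by positivity : (0:ℝ) ≤ (1 - δ₁₂) * (δ₁ - δ₁₂) * (1 - δ₂) + (δ₂ - δ₁₂) * (1 - δ₁) * (1 - δ₂))]
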